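/- Let Λ be a positive integer, h > 0, φ_λ = (2λ−1)h, and 0 ≤ y ≤ Λh. Let Δ*_λ = min(h, max(0, y − (λ−1)h)) be the greedy (ESO) filling and let Δ'_1,…,Δ'_Λ be any feasible assignment with 0 ≤ Δ'_λ ≤ h and Σ_{λ=1}^Λ Δ'_λ = y. Then Σ_{λ=1}^Λ φ_λ Δ'_λ − y² ≥ Σ_{λ=1}^Λ φ_λ Δ*_λ − y² ≥ 0 (the inequality chain (19) of the paper). -/

import Mathlib

open Finset

/-- Abel-type identity: weighted sum in terms of partial sums. -/
private lemma pwl_abel (h : ℝ) (Δ : ℕ → ℝ) (Λ : ℕ) :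
    (∑ l ∈ Icc 1 Λ, ((2 * (l : ℝ) - 1) * h) * Δ l)
      = (2 * (Λ : ℝ) + 1) * h * (∑ l ∈ Icc 1 Λ, Δ l)
        - 2 * h * ∑ j ∈ Icc 1 Λ, (∑ l ∈ Icc 1 j, Δ l) := by
  induction Λ with
  | zero => simp
  | succ n ih =>
      rw [Finset.sum_Icc_succ_top (by omega : 1 ≤ n + 1),
          Finset.sum_Icc_succ_top (by omega : 1 ≤ n + 1)
            (fun j => (∑ l ∈ Icc 1 j, Δ l)),
          Finset.sum_Icc_succ_top (by omega : 1 ≤ n + 1) Δ, ih]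
      push_cast
      ring

/-- Partial sums of the greedy filling. -/
private lemma pwl_greedy_partial (h : ℝ) (hh : 0 < h) (y : ℝ) (hy0 : 0 ≤ y)
    (j : ℕ) :
    (∑ l ∈ Icc 1 j, min h (max 0 (y - ((l : ℝ) - 1) * h))) = min ((j : ℝ) * h) y := by
  induction j with
  | zero => simp [hy0]
  | succ n ih =>
      rw [Finset.sum_Icc_succ_top (by omega : 1 ≤ n + 1), ih]
      have hn : ((n + 1 : ℕ) : ℝ) - 1 = (n : ℝ) := by push_cast; ring
      rw [hn]
      push_cast
      rcases le_total y ((n : ℝ) * h) with h1 | h1 <;>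
        rcases le_total y (((n : ℝ) + 1) * h) with h2 | h2 <;>
          simp [min_def, max_def] <;> split_ifs <;> nlinarith

private lemma pwl_gauss (n : ℕ) :
    (∑ j ∈ Icc 1 n, (j : ℝ)) = (n : ℝ) * ((n : ℝ) + 1) / 2 := by
  induction n with
  | zero => simp
  | succ m ihm =>
      rw [Finset.sum_Icc_succ_top (by omega : 1 ≤ m + 1), ihm]
      push_cast
      ring

/-- Lower bound via the partial-sum representation. -/
private lemma pwl_lower (h : ℝ) (hh : 0 < h) :
    ∀ Λ : ℕ, ∀ y : ℝ, 0 ≤ y → y ≤ Λ * h →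
      (2 * (Λ : ℝ) + 1) * h * y - 2 * h * (∑ j ∈ Icc 1 Λ, min ((j : ℝ) * h) y)
        ≥ y ^ 2 := by
  intro Λ
  induction Λ with
  | zero =>
      intro y h0 h1
      simp only [Nat.cast_zero, zero_mul] at h1 ⊢
      have : y = 0 := le_antisymm h1 h0
      simp [this]
  | succ n ih =>
      intro y h0 h1
      push_cast at h1
      rw [Finset.sum_Icc_succ_top (by omega : 1 ≤ n + 1)]
      have hmin : min (((n + 1 : ℕ) : ℝ) * h) y = y := by
        apply min_eq_right
        push_cast
        linarith
      rw [hmin]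
      rcases le_total y ((n : ℝ) * h) with hc | hc
      · have := ih y h0 hc
        push_cast
        nlinarith
      · have hsum : (∑ j ∈ Icc 1 n, min ((j : ℝ) * h) y)
            = ∑ j ∈ Icc 1 n, (j : ℝ) * h := by
          apply Finset.sum_congr rfl
          intro j hj
          have hj2 : (j : ℝ) ≤ (n : ℝ) := by
            exact_mod_cast (Finset.mem_Icc.mp hj).2
          apply min_eq_left
          nlinarith
        have hgauss := pwl_gauss n
        rw [hsum, ← Finset.sum_mul, hgauss]
        push_cast
        nlinarith [mul_nonneg (sub_nonneg.mpr hc) (sub_nonneg.mpr h1)]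

/-- Inequality chain (19): `Σ φ Δ' − y² ≥ Σ φ Δ* − y² ≥ 0` for the greedy
(ESO) filling `Δ*` and any feasible filling `Δ'` of the same `y`. -/
theorem pwl_error_chain
    (Λ : ℕ) (hΛ : 0 < Λ) (h : ℝ) (hh : 0 < h)
    (y : ℝ) (hy0 : 0 ≤ y) (hyΛ : y ≤ Λ * h)
    (Δ' : ℕ → ℝ) (hΔ' : ∀ l ∈ Finset.Icc 1 Λ, 0 ≤ Δ' l ∧ Δ' l ≤ h)
    (hsum : (∑ l ∈ Finset.Icc 1 Λ, Δ' l) = y) :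
    (∑ l ∈ Finset.Icc 1 Λ, ((2 * (l : ℝ) - 1) * h) * Δ' l) - y ^ 2
      ≥ (∑ l ∈ Finset.Icc 1 Λ,
          ((2 * (l : ℝ) - 1) * h) * min h (max 0 (y - ((l : ℝ) - 1) * h))) - y ^ 2 ∧
    (∑ l ∈ Finset.Icc 1 Λ,
        ((2 * (l : ℝ) - 1) * h) * min h (max 0 (y - ((l : ℝ) - 1) * h))) - y ^ 2
      ≥ 0 := by
  -- greedy weighted sum in closed form
  have hstar : (∑ l ∈ Icc 1 Λ,
        ((2 * (l : ℝ) - 1) * h) * min h (max 0 (y - ((l : ℝ) - 1) * h)))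
      = (2 * (Λ : ℝ) + 1) * h * y
        - 2 * h * ∑ j ∈ Icc 1 Λ, min ((j : ℝ) * h) y := by
    have h1 : (∑ j ∈ Icc 1 Λ, (∑ l ∈ Icc 1 j, min h (max 0 (y - ((l : ℝ) - 1) * h))))
        = ∑ j ∈ Icc 1 Λ, min ((j : ℝ) * h) y :=
      Finset.sum_congr rfl fun j _ => pwl_greedy_partial h hh y hy0 j
    rw [pwl_abel h _ Λ, h1, pwl_greedy_partial h hh y hy0 Λ, min_eq_right hyΛ]
  -- feasible weighted sum in closed form
  have hfeas : (∑ l ∈ Icc 1 Λ, ((2 * (l : ℝ) - 1) * h) * Δ' l)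
      = (2 * (Λ : ℝ) + 1) * h * y
        - 2 * h * ∑ j ∈ Icc 1 Λ, (∑ l ∈ Icc 1 j, Δ' l) := by
    rw [pwl_abel h Δ' Λ, hsum]
  -- partial sums of feasible filling are dominated
  have hdom : ∀ j ∈ Icc 1 Λ, (∑ l ∈ Icc 1 j, Δ' l) ≤ min ((j : ℝ) * h) y := by
    intro j hj
    obtain ⟨hj1, hj2⟩ := Finset.mem_Icc.mp hj
    apply le_min
    · calc (∑ l ∈ Icc 1 j, Δ' l) ≤ ∑ l ∈ Icc 1 j, h := by
            apply Finset.sum_le_sum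
            intro l hl
            obtain ⟨hl1, hl2⟩ := Finset.mem_Icc.mp hl
            exact (hΔ' l (Finset.mem_Icc.mpr ⟨hl1, hl2.trans hj2⟩)).2
        _ = (j : ℝ) * h := by
            rw [Finset.sum_const, Nat.card_Icc]
            simp [nsmul_eq_mul]
    · rw [← hsum]
      have hsplit : (∑ l ∈ Ioc 0 j, Δ' l) + (∑ l ∈ Ioc j Λ, Δ' l)
          = ∑ l ∈ Ioc 0 Λ, Δ' l :=
        Finset.sum_Ioc_consecutive _ (Nat.zero_le j) hj2
      have hIcc : ∀ k : ℕ, Icc 1 k = Ioc 0 k := fun k => by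
        rw [← Finset.Icc_add_one_left_eq_Ioc, zero_add]
      rw [hIcc j, hIcc Λ, ← hsplit]
      have : 0 ≤ ∑ l ∈ Ioc j Λ, Δ' l := by
        apply Finset.sum_nonneg
        intro l hl
        obtain ⟨hl1, hl2⟩ := Finset.mem_Ioc.mp hl
        exact (hΔ' l (Finset.mem_Icc.mpr ⟨by omega, hl2⟩)).1
      linarith
  constructor
  · rw [hstar, hfeas]
    have : (∑ j ∈ Icc 1 Λ, (∑ l ∈ Icc 1 j, Δ' l))
        ≤ ∑ j ∈ Icc 1 Λ, min ((j : ℝ) * h) y :=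
      Finset.sum_le_sum hdom
    nlinarith
  · rw [hstar]
    have := pwl_lower h hh Λ y hy0 hyΛ
    linarith
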